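/- Let C be a premodular G-category over a field K of characteristic zero. For every α, β ∈ G, in the Verlinde algebra of C one has ω_α ⊗ ω_β = Δ_0 · ω_{α+β}, where ω_γ = Σ_{i ∈ I_γ} dim(V_i)·V_i and Δ_0 = Σ_{i ∈ I_0} dim(V_i)². -/
import Mathlib


/-- In the Verlinde algebra of a premodular G-category,
ω_α ⊗ ω_β = Δ₀ • ω_{α+β}, where ω_γ = Σ_{i∈I_γ} dim(V_i)·V_i and
Δ₀ = Σ_{i∈I₀} dim(V_i)². Here `cl i` is the Verlinde class of the simple
object indexed by i, `dgr i` its grading, `dm i` its quantum dimension,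
and `I α` the (finite) set of iso-classes of simple objects in C_α. -/
theorem omega_mul_omega {K : Type*} [Field K] [CharZero K]
    {G : Type*} [AddCommGroup G] {ι : Type*}
    {A : Type*} [CommRing A] [Algebra K A]
    (cl : ι → A) (dgr : ι → G) (dm : ι → K)
    (I : G → Finset ι) (hI : ∀ (α : G) (i : ι), i ∈ I α ↔ dgr i = α)
    (ω : G → A) (hω : ∀ α, ω α = ∑ i ∈ I α, dm i • cl i)
    (Δ : G → K) (hΔ : ∀ α, Δ α = ∑ i ∈ I α, dm i ^ 2)
    (hmul : ∀ (i : ι) (α : G), cl i * ω α = dm i • ω (α + dgr i))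
    (hdm : ∀ i, dm i ≠ 0)
    (hne : ∀ α : G, (I α).Nonempty) :
    ∀ α β : G, ω α * ω β = Δ 0 • ω (α + β) := by
  -- Step 1: expanding over the first factor, ω α * ω β = Δ α • ω (α+β).
  have hA : ∀ α β : G, ω α * ω β = Δ α • ω (α + β) := by
    intro α β
    rw [hω α, Finset.sum_mul, hΔ α, Finset.sum_smul]
    refine Finset.sum_congr rfl fun i hi => ?_
    have hdg : dgr i = α := (hI α i).mp hi
    rw [smul_mul_assoc, hmul i β, hdg, smul_smul, ← sq, add_comm β α]
  -- Step 1': by commutativity, also ω α * ω β = Δ β • ω (α+β).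
  have hA' : ∀ α β : G, ω α * ω β = Δ β • ω (α + β) := by
    intro α β
    rw [mul_comm, hA, add_comm]
  -- Step 2: Δ β • ω (β+γ+δ) = Δ γ • ω (β+γ+δ), by multiplying ω β * ω γ by a
  -- simple class of degree δ and comparing the two expansions.
  have hB : ∀ β γ δ : G, Δ β • ω (β + γ + δ) = Δ γ • ω (β + γ + δ) := by
    intro β γ δ
    obtain ⟨i, hi⟩ := hne δ
    have hdg : dgr i = δ := (hI δ i).mp hi
    have h1 : cl i * (ω β * ω γ) = dm i • (Δ β • ω (β + γ + δ)) := by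
      rw [hA, mul_smul_comm, hmul i (β + γ), hdg, smul_comm]
    have h2 : cl i * (ω β * ω γ) = dm i • (Δ γ • ω (β + γ + δ)) := by
      rw [hA', mul_smul_comm, hmul i (β + γ), hdg, smul_comm]
    have h3 := h1.symm.trans h2
    have h4 := congrArg (fun x => (dm i)⁻¹ • x) h3
    simpa [smul_smul, inv_mul_cancel_left₀ (hdm i)] using h4
  intro α β
  have := hB α 0 β
  rw [add_zero] at this
  exact (hA α β).trans this
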